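/- Let K⃗ be a complete symmetric digraph on an arbitrary (finite or infinite) vertex set, and let c : E(K⃗) → {1,...,r+1} be an edge-colouring such that for each i ∈ {1,...,r}, there is no directed path of length ℓᵢ all of whose edges have colour i. Then the vertex set can be partitioned into at most ℓ₁·ℓ₂···ℓ_r sets, each of which spans a complete symmetric digraph all of whose edges have colour r+1. -/

import Mathlib

open Relation

/-- A relation is acyclic: no edge closes back via reflexive-transitive steps. -/
private def Acy {V : Type*} (R : V → V → Prop) : Prop :=
  ∀ x y, R x y → ¬ ReflTransGen R y x

private lemma rtg_sUnion_chain {V : Type*} {C : Set (Set (V × V))}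
    (hC : IsChain (· ⊆ ·) C) {x y : V}
    (h : ReflTransGen (fun a b => (a, b) ∈ ⋃₀ C) x y) :
    x = y ∨ ∃ S ∈ C, ReflTransGen (fun a b => (a, b) ∈ S) x y := by
  induction h with
  | refl => exact Or.inl rfl
  | tail hab hbc ih =>
    obtain ⟨T, hTC, hbcT⟩ := hbc
    rcases ih with rfl | ⟨S, hSC, hS⟩
    · exact Or.inr ⟨T, hTC, ReflTransGen.single hbcT⟩
    · rcases eq_or_ne S T with rfl | hne
      · exact Or.inr ⟨S, hSC, hS.tail hbcT⟩
      · rcases hC hSC hTC hne with hST | hTS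
        · exact Or.inr ⟨T, hTC, (ReflTransGen.mono (fun a b hab => hST hab) _ _ hS).tail hbcT⟩
        · exact Or.inr ⟨S, hSC, hS.tail (hTS hbcT)⟩

private lemma rtg_union_single {V : Type*} {R : V → V → Prop} {u v a b : V}
    (h : ReflTransGen (fun x y => R x y ∨ (x = u ∧ y = v)) a b) :
    ReflTransGen R a b ∨ (ReflTransGen R a u ∧ ReflTransGen R v b) := by
  induction h with
  | refl => exact Or.inl .refl
  | tail hab hbc ih =>
    rcases hbc with hR | ⟨rfl, rfl⟩
    · rcases ih with h1 | ⟨h1, h2⟩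
      · exact Or.inl (h1.tail hR)
      · exact Or.inr ⟨h1, h2.tail hR⟩
    · rcases ih with h1 | ⟨h1, _⟩
      · exact Or.inr ⟨h1, .refl⟩
      · exact Or.inr ⟨h1, .refl⟩

private lemma walk_rtg {V : Type*} {R : V → V → Prop} {k : ℕ}
    {w : Fin (k + 1) → V} (hw : ∀ j : Fin k, R (w j.castSucc) (w j.succ))
    {m n : ℕ} (hm : m ≤ n) (hn : n ≤ k) :
    ReflTransGen R (w ⟨m, by omega⟩) (w ⟨n, by omega⟩) := by
  induction n, hm using Nat.le_induction with
  | base => exact .refl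
  | succ n hmn ih =>
    refine (ih (by omega)).tail ?_
    have := hw ⟨n, by omega⟩
    simpa [Fin.castSucc, Fin.succ, Fin.castAdd, Fin.castLE] using this

private lemma walk_inj {V : Type*} {R : V → V → Prop} (hA : Acy R) {k : ℕ}
    {w : Fin (k + 1) → V} (hw : ∀ j : Fin k, R (w j.castSucc) (w j.succ)) :
    Function.Injective w := by
  have key : ∀ a b : Fin (k + 1), a.val < b.val → w a ≠ w b := by
    intro a b hab heq
    have hak : a.val < k := by omega
    have hedge : R (w a) (w ⟨a.val + 1, by omega⟩) := by
      have := hw ⟨a.val, hak⟩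
      simpa [Fin.castSucc, Fin.succ, Fin.castAdd, Fin.castLE, Fin.eta] using this
    have hrtg : ReflTransGen R (w ⟨a.val + 1, by omega⟩) (w ⟨b.val, b.isLt⟩) :=
      walk_rtg hw (by omega) (by omega)
    have hb : (⟨b.val, b.isLt⟩ : Fin (k + 1)) = b := rfl
    rw [hb, ← heq] at hrtg
    exact hA _ _ hedge hrtg
  intro a b heq
  by_contra hne
  rcases lt_or_gt_of_ne (Fin.val_ne_of_ne hne) with h | h
  · exact key a b h heq
  · exact key b a h heq.symm

private lemma exists_level {V : Type*} (L : ℕ) (E : V → V → Prop)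
    (hE : ¬∃ v : Fin (L + 1) → V, Function.Injective v ∧
      ∀ j : Fin L, E (v j.castSucc) (v j.succ)) :
    ∃ g : V → ℕ, (∀ v, g v < L) ∧ ∀ u v : V, u ≠ v → E u v → g u ≠ g v := by
  obtain ⟨M, hM⟩ : ∃ M, Maximal
      (fun S : Set (V × V) =>
        (∀ p ∈ S, E p.1 p.2) ∧ Acy (fun a b => (a, b) ∈ S)) M := by
    apply zorn_subset
    intro C hC𝒮 hC
    refine ⟨⋃₀ C, ⟨?_, ?_⟩, fun s hs => Set.subset_sUnion_of_mem hs⟩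
    · rintro p ⟨S, hS, hp⟩
      exact (hC𝒮 hS).1 p hp
    · intro x y hxy hcyc
      obtain ⟨T, hT, hxyT⟩ := hxy
      rcases rtg_sUnion_chain hC hcyc with rfl | ⟨S, hS, hSrtg⟩
      · exact (hC𝒮 hT).2 _ _ hxyT .refl
      · rcases eq_or_ne S T with rfl | hne
        · exact (hC𝒮 hS).2 x y hxyT hSrtg
        · rcases hC hS hT hne with hST | hTS
          · exact (hC𝒮 hT).2 x y hxyT (ReflTransGen.mono (fun a b hab => hST hab) _ _ hSrtg)
          · exact (hC𝒮 hS).2 x y (hTS hxyT) hSrtg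
  set R : V → V → Prop := fun a b => (a, b) ∈ M with hRdef
  have hRE : ∀ a b, R a b → E a b := fun a b h => hM.1.1 (a, b) h
  have hRA : Acy R := hM.1.2
  set W : V → Set ℕ := fun v => {k | ∃ w : Fin (k + 1) → V,
    w (Fin.last k) = v ∧ ∀ j : Fin k, R (w j.castSucc) (w j.succ)} with hWdef
  have hW0 : ∀ v, 0 ∈ W v := fun v => ⟨fun _ => v, rfl, fun j => j.elim0⟩
  have hWlt : ∀ v k, k ∈ W v → k < L := by
    rintro v k ⟨w, hlast, hw⟩
    by_contra hk
    push_neg at hk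
    apply hE
    refine ⟨fun j => w (Fin.castLE (by omega) j), ?_, ?_⟩
    · exact (walk_inj hRA hw).comp (Fin.castLE_injective (by omega))
    · intro j
      have := hRE _ _ (hw ⟨j.val, by omega⟩)
      simpa [Fin.castSucc, Fin.succ, Fin.castAdd, Fin.castLE] using this
  have hWbdd : ∀ v, BddAbove (W v) := fun v => ⟨L, fun k hk => (hWlt v k hk).le⟩
  set g : V → ℕ := fun v => sSup (W v) with hgdef
  have hgmem : ∀ v, g v ∈ W v := fun v => Nat.sSup_mem ⟨0, hW0 v⟩ (hWbdd v)
  have hglt : ∀ v, g v < L := fun v => hWlt v _ (hgmem v)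
  have hstep : ∀ u v, R u v → g u < g v := by
    intro u v huv
    obtain ⟨w, hlast, hw⟩ := hgmem u
    have hmem : g u + 1 ∈ W v := by
      refine ⟨Fin.snoc w v, Fin.snoc_last _ _, ?_⟩
      intro j
      induction j using Fin.lastCases with
      | last =>
        rw [Fin.succ_last]
        simpa [Fin.snoc_castSucc, Fin.snoc_last, hlast] using huv
      | cast j =>
        rw [Fin.succ_castSucc]
        simp only [Fin.snoc_castSucc]
        exact hw j
    exact Nat.lt_of_succ_le (le_csSup (hWbdd v) hmem)
  have hmono : ∀ a b : V, ReflTransGen R a b → g a ≤ g b := by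
    intro a b h
    induction h with
    | refl => exact le_refl _
    | tail hab hbc ih => exact ih.trans (hstep _ _ hbc).le
  refine ⟨g, hglt, ?_⟩
  intro u v huv hEuv
  by_cases hmem : (u, v) ∈ M
  · exact (hstep u v hmem).ne
  · have hvu : ReflTransGen R v u := by
      have hnotacy : ¬ Acy (fun a b => R a b ∨ (a = u ∧ b = v)) := by
        intro hacy
        have hmem' : (fun S : Set (V × V) =>
            (∀ p ∈ S, E p.1 p.2) ∧ Acy (fun a b => (a, b) ∈ S))
            (M ∪ {(u, v)}) := by
          constructor
          · rintro p (hp | hp)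
            · exact hM.1.1 p hp
            · rw [Set.mem_singleton_iff] at hp
              subst hp
              exact hEuv
          · have hiff : ∀ a b : V, ((a, b) ∈ M ∪ {(u, v)}) ↔
                (R a b ∨ (a = u ∧ b = v)) := by
              intro a b
              simp [hRdef, Prod.ext_iff, or_comm]
            intro x y hxy hcyc
            exact hacy x y ((hiff x y).1 hxy)
              (ReflTransGen.mono (fun a b hab => (hiff a b).1 hab) _ _ hcyc)
        have hsub := hM.2 hmem' Set.subset_union_left
        exact hmem (hsub (Set.mem_union_right _ rfl))
      unfold Acy at hnotacy
      push_neg at hnotacy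
      obtain ⟨x, y, hxy, hcyc⟩ := hnotacy
      rcases hxy with hR | ⟨rfl, rfl⟩
      · rcases rtg_union_single hcyc with h1 | ⟨h1, h2⟩
        · exact absurd h1 (hRA x y hR)
        · exact (h2.tail hR).trans h1
      · rcases rtg_union_single hcyc with h1 | ⟨h1, _⟩
        · exact h1
        · exact h1
    rcases hvu.cases_head with rfl | ⟨z, hvz, hzu⟩
    · exact absurd rfl huv
    · exact ((hstep v z hvz).trans_le (hmono z u hzu)).ne'

/-- Let `c` be an `(r+1)`-edge-colouring of a complete symmetric digraph on an
arbitrary vertex set `V` (colour `i : Fin r` via `i.castSucc`, last colour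
`Fin.last r`) such that for each `i ∈ [r]` there is no directed path of length
`ℓ i` in colour `i`. Then `V` can be partitioned into at most `∏ i, ℓ i` sets,
each spanning a complete symmetric digraph monochromatic in colour `r + 1`. -/
theorem stmt4 {V : Type*} (r : ℕ) (ℓ : Fin r → ℕ) (hℓ : ∀ i, 0 < ℓ i)
    (c : V → V → Fin (r + 1))
    (hc : ∀ i : Fin r, ¬∃ v : Fin (ℓ i + 1) → V, Function.Injective v ∧
      ∀ j : Fin (ℓ i), c (v j.castSucc) (v j.succ) = i.castSucc) :
    ∃ f : V → Fin (∏ i, ℓ i), ∀ u v : V, u ≠ v → f u = f v →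
      c u v = Fin.last r := by
  have key : ∀ i : Fin r, ∃ g : V → ℕ, (∀ v, g v < ℓ i) ∧
      ∀ u v : V, u ≠ v → c u v = i.castSucc → g u ≠ g v := fun i =>
    exists_level (ℓ i) (fun u v => c u v = i.castSucc) (hc i)
  choose g hglt hgne using key
  have e : (∀ i : Fin r, Fin (ℓ i)) ≃ Fin (∏ i, ℓ i) := by
    apply Fintype.equivFinOfCardEq
    simp
  refine ⟨fun v => e (fun i => ⟨g i v, hglt i v⟩), ?_⟩
  intro u v huv hfe
  by_contra hne
  obtain ⟨i, hi⟩ := Fin.exists_castSucc_eq.2 hne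
  have hfe' : (fun i : Fin r => (⟨g i u, hglt i u⟩ : Fin (ℓ i))) =
      (fun i : Fin r => (⟨g i v, hglt i v⟩ : Fin (ℓ i))) := e.injective hfe
  have : g i u = g i v := congrArg Fin.val (congrFun hfe' i)
  exact hgne i u v huv hi.symm this
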